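/- In the setting of the nonautonomous Grobman–Hartman theorem, the conjugating maps $h_m$ satisfying $h_{m+1}\circ G_m=A_m\circ h_m$ and $\sup_x\|h_m(x)-x\|\le\varepsilon$ are injective: if $h_m(y)=h_m(z)$ for some $y,z\in X$ and some $m$, then $y=z$. -/

import Mathlib

/-- The sequence `A` of bounded operators admits an exponential dichotomy: there exist
an evolution family `E`, projections `P` commuting with the dynamics and constants
`C, lam > 0` with the usual exponential bounds. -/
def ExpDichotomy {X : Type*} [NormedAddCommGroup X] [NormedSpace ℝ X]
    (A : ℤ → X →L[ℝ] X) : Prop :=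
  ∃ (E : ℤ → ℤ → X →L[ℝ] X) (P : ℤ → X →L[ℝ] X) (C lam : ℝ),
    0 < C ∧ 0 < lam ∧
    (∀ n, E n n = ContinuousLinearMap.id ℝ X) ∧
    (∀ m n, E (m + 1) n = (A m).comp (E m n)) ∧
    (∀ m, (P m).comp (P m) = P m) ∧
    (∀ m, (P (m + 1)).comp (A m) = (A m).comp (P m)) ∧
    (∀ m n, n ≤ m → ‖(E m n).comp (P n)‖ ≤ C * Real.exp (-lam * ((m - n : ℤ) : ℝ))) ∧
    (∀ m n, m ≤ n → ‖(E m n).comp (ContinuousLinearMap.id ℝ X - P n)‖ ≤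
      C * Real.exp (-lam * ((n - m : ℤ) : ℝ)))

set_option synthInstance.maxHeartbeats 1000000
set_option maxHeartbeats 1000000
set_option linter.unusedSectionVars false
set_option linter.unusedVariables false

set_option synthInstance.maxHeartbeats 1000000
set_option maxHeartbeats 1000000
set_option linter.unusedSectionVars false

section Orbit

variable {X : Type*}

/-- Forward orbit of a sequence of bijections, starting at time `m`. -/
def zorbFwd (e : ℤ → X ≃ X) (m : ℤ) (x : X) : ℕ → X
  | 0 => x
  | k + 1 => e (m + k) (zorbFwd e m x k)

/-- Backward orbit of a sequence of bijections, starting at time `m`. -/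
def zorbBwd (e : ℤ → X ≃ X) (m : ℤ) (x : X) : ℕ → X
  | 0 => x
  | k + 1 => (e (m - (k + 1))).symm (zorbBwd e m x k)

/-- Full orbit over `ℤ` of the nonautonomous system `e`, passing through `x` at time `m`. -/
def zorb (e : ℤ → X ≃ X) (m : ℤ) (x : X) (n : ℤ) : X :=
  if m ≤ n then zorbFwd e m x (n - m).toNat else zorbBwd e m x (m - n).toNat

lemma zorb_base (e : ℤ → X ≃ X) (m : ℤ) (x : X) : zorb e m x m = x := by
  simp [zorb, zorbFwd]

lemma zorb_step (e : ℤ → X ≃ X) (m : ℤ) (x : X) (n : ℤ) :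
    zorb e m x (n + 1) = e n (zorb e m x n) := by
  by_cases hmn : m ≤ n
  · rw [zorb, zorb, if_pos (by omega : m ≤ n + 1), if_pos hmn]
    have h2 : (n + 1 - m).toNat = (n - m).toNat + 1 := by omega
    rw [h2, zorbFwd]
    have h3 : m + ((n - m).toNat : ℤ) = n := by omega
    rw [h3]
  · push_neg at hmn
    have key : zorb e m x (n + 1) = zorbBwd e m x (m - (n + 1)).toNat := by
      rw [zorb]
      by_cases h : m ≤ n + 1
      · rw [if_pos h]
        have h1 : (n + 1 - m).toNat = 0 := by omega
        have h2 : (m - (n + 1)).toNat = 0 := by omega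
        rw [h1, h2]; rfl
      · rw [if_neg h]
    rw [key, zorb, if_neg (by omega : ¬ m ≤ n)]
    have h2 : (m - n).toNat = (m - (n + 1)).toNat + 1 := by omega
    rw [h2, zorbBwd]
    have h3 : m - (((m - (n + 1)).toNat : ℤ) + 1) = n := by omega
    rw [h3, Equiv.apply_symm_apply]

lemma zorb_agree (e : ℤ → X ≃ X) (Y Z : ℤ → X)
    (hY : ∀ n, Y (n + 1) = e n (Y n)) (hZ : ∀ n, Z (n + 1) = e n (Z n))
    (n₀ : ℤ) (h : Y n₀ = Z n₀) : ∀ n, Y n = Z n := by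
  intro n
  rcases le_total n₀ n with hle | hle
  · exact Int.le_induction (motive := fun j _ => Y j = Z j) h (fun k _ ih => by rw [hY, hZ]; exact congrArg _ ih) n hle
  · refine Int.le_induction_down (motive := fun j _ => Y j = Z j) h (fun k _ ih => ?_) n hle
    apply (e (k - 1)).injective
    have e1 : k - 1 + 1 = k := by ring
    rw [← hY, ← hZ, e1, ih]

end Orbit

section Pert

variable {X : Type*} [NormedAddCommGroup X] [NormedSpace ℝ X] [CompleteSpace X]

lemma rank_one_unit (f : X →L[ℝ] ℝ) (v : X) (hβ : (1 : ℝ) + f v ≠ 0) :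
    ∃ u : (X →L[ℝ] X)ˣ, (u : X →L[ℝ] X) = 1 + f.smulRight v := by
  set β : ℝ := 1 + f v with hb
  have h5 : β⁻¹ * (1 + f v) = 1 := by rw [← hb]; exact inv_mul_cancel₀ hβ
  have hK : ∀ y, (f.smulRight v) y = f y • v := fun _ => rfl
  refine ⟨⟨1 + f.smulRight v, 1 - β⁻¹ • f.smulRight v, ?_, ?_⟩, rfl⟩
  · ext x
    rw [ContinuousLinearMap.mul_apply]
    have h1 : ((1 : X →L[ℝ] X) - β⁻¹ • f.smulRight v) x = x - β⁻¹ • (f x • v) := by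
      simp [hK]
    rw [h1]
    have h2 : ((1 : X →L[ℝ] X) + f.smulRight v) (x - β⁻¹ • (f x • v))
        = (x - β⁻¹ • (f x • v)) + f (x - β⁻¹ • (f x • v)) • v := by
      simp [hK]
    rw [h2]
    have h3 : f (x - β⁻¹ • (f x • v)) = f x - β⁻¹ * (f x * f v) := by
      rw [map_sub, map_smul, map_smul]
      simp [smul_eq_mul]
    rw [h3]
    have h4 : f x - β⁻¹ * (f x * f v) = β⁻¹ * f x := by linear_combination (-(f x)) * h5
    rw [h4, smul_smul, ContinuousLinearMap.one_apply]
    abel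
  · ext x
    rw [ContinuousLinearMap.mul_apply]
    have h1 : ((1 : X →L[ℝ] X) + f.smulRight v) x = x + f x • v := by simp [hK]
    rw [h1]
    have h2 : ((1 : X →L[ℝ] X) - β⁻¹ • f.smulRight v) (x + f x • v)
        = (x + f x • v) - β⁻¹ • (f (x + f x • v) • v) := by
      simp [hK]
    rw [h2]
    have h3 : f (x + f x • v) = f x + f x * f v := by
      rw [map_add, map_smul]
      simp [smul_eq_mul]
    rw [h3, smul_smul]
    have h4 : β⁻¹ * (f x + f x * f v) = f x := by linear_combination (f x) * h5
    rw [h4, ContinuousLinearMap.one_apply]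
    abel

lemma exists_pert (A : X ≃L[ℝ] X) {c : ℝ} (hc : 0 < c) {w w' : X}
    (hw : w ≠ 0) (hw' : w' ≠ 0) (hr : ‖w' - A w‖ ≤ c / 2 * ‖w‖) :
    ∃ B : X ≃L[ℝ] X, ‖(B : X →L[ℝ] X) - (A : X →L[ℝ] X)‖ ≤ c ∧ B w = w' := by
  classical
  set r : X := w' - A w with hrdef
  have hws : (A.symm w' : X) = w + A.symm r := by
    rw [hrdef, map_sub]
    simp
  have hwpos : (0 : ℝ) < ‖w‖ := norm_pos_iff.mpr hw
  have hstar_ne : A.symm w' ≠ 0 := by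
    intro h0
    apply hw'
    have := congrArg A h0
    simpa using this
  obtain ⟨f₀, hf₀n, hf₀w'⟩ := exists_dual_vector ℝ w (norm_ne_zero_iff.mpr hw)
  have hf₀w : f₀ w = ‖w‖ := by exact_mod_cast hf₀w'
  obtain ⟨f, hfw_pos, hfstar, hfbound⟩ :
      ∃ f : X →L[ℝ] ℝ, 0 < f w ∧ f (A.symm w') ≠ 0 ∧ ‖f‖ * ‖w‖ ≤ 2 * f w := by
    by_cases h0 : f₀ (A.symm w') ≠ 0
    · exact ⟨f₀, by rw [hf₀w]; exact hwpos, h0, by rw [hf₀w, hf₀n]; linarith⟩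
    · push_neg at h0
      obtain ⟨f₁, hf₁n, hf₁w'⟩ := exists_dual_vector ℝ (A.symm w') (norm_ne_zero_iff.mpr hstar_ne)
      have hf₁w : f₁ (A.symm w') = ‖A.symm w'‖ := by exact_mod_cast hf₁w'
      have h1 : |f₁ w| ≤ ‖w‖ := by
        have := f₁.le_opNorm w
        rw [hf₁n, one_mul] at this
        simpa [Real.norm_eq_abs] using this
      have hstar_pos : (0 : ℝ) < ‖A.symm w'‖ := norm_pos_iff.mpr hstar_ne
      refine ⟨f₀ + (3⁻¹ : ℝ) • f₁, ?_, ?_, ?_⟩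
      · simp only [ContinuousLinearMap.add_apply, ContinuousLinearMap.smul_apply,
          smul_eq_mul, hf₀w]
        have := abs_le.mp h1
        nlinarith
      · simp only [ContinuousLinearMap.add_apply, ContinuousLinearMap.smul_apply,
          smul_eq_mul, h0, hf₁w, zero_add]
        positivity
      · have hsm : ‖(3⁻¹ : ℝ) • f₁‖ = 3⁻¹ := by
          rw [norm_smul (3⁻¹ : ℝ) f₁, hf₁n, mul_one, Real.norm_eq_abs]
          norm_num
        have hn : ‖f₀ + (3⁻¹ : ℝ) • f₁‖ ≤ 1 + 3⁻¹ := by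
          calc ‖f₀ + (3⁻¹ : ℝ) • f₁‖ ≤ ‖f₀‖ + ‖(3⁻¹ : ℝ) • f₁‖ := norm_add_le _ _
          _ = 1 + 3⁻¹ := by rw [hf₀n, hsm]
        have hfw : (f₀ + (3⁻¹ : ℝ) • f₁) w = ‖w‖ + 3⁻¹ * f₁ w := by
          simp [hf₀w]
        rw [hfw]
        have h2 := abs_le.mp h1
        nlinarith [hn, hwpos, mul_le_mul_of_nonneg_right hn hwpos.le]
  -- the rank one perturbation
  set v : X := (f w)⁻¹ • A.symm r with hv
  have hβ : (1 : ℝ) + f v ≠ 0 := by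
    have hβeq : (1 : ℝ) + f v = (f w)⁻¹ * f (A.symm w') := by
      rw [hv, map_smul, smul_eq_mul, hws, map_add]
      field_simp
    rw [hβeq]
    exact mul_ne_zero (inv_ne_zero hfw_pos.ne') hfstar
  obtain ⟨u, hu⟩ := rank_one_unit f v hβ
  set B : X ≃L[ℝ] X := (ContinuousLinearEquiv.ofUnit u).trans A with hB
  have hBapp : ∀ x, B x = A (x + f x • v) := by
    intro x
    have : (ContinuousLinearEquiv.ofUnit u) x = ((u : X →L[ℝ] X)) x := rfl
    rw [hB]
    show A ((ContinuousLinearEquiv.ofUnit u) x) = A (x + f x • v)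
    rw [this, hu]
    simp
  refine ⟨B, ?_, ?_⟩
  · have hdiff : (B : X →L[ℝ] X) - (A : X →L[ℝ] X) = f.smulRight ((f w)⁻¹ • r) := by
      ext x
      simp only [ContinuousLinearMap.sub_apply, ContinuousLinearEquiv.coe_coe,
        ContinuousLinearMap.smulRight_apply]
      rw [hBapp x, map_add, hv]
      simp only [map_smul, ContinuousLinearEquiv.apply_symm_apply]
      abel
    rw [hdiff, ContinuousLinearMap.norm_smulRight_apply]
    have h1 : ‖(f w)⁻¹ • r‖ = (f w)⁻¹ * ‖r‖ := by
      rw [norm_smul, Real.norm_eq_abs, abs_of_pos (inv_pos.mpr hfw_pos)]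
    rw [h1]
    have h2 : ‖f‖ * ‖r‖ ≤ c * f w := by
      nlinarith [mul_le_mul hfbound hr (norm_nonneg r) (by positivity : (0:ℝ) ≤ 2 * f w),
        norm_nonneg f, norm_nonneg r]
    calc ‖f‖ * ((f w)⁻¹ * ‖r‖) = ‖f‖ * ‖r‖ * (f w)⁻¹ := by ring
    _ ≤ (c * f w) * (f w)⁻¹ := by
        exact mul_le_mul_of_nonneg_right h2 (inv_pos.mpr hfw_pos).le
    _ = c := by
        rw [mul_assoc, mul_inv_cancel₀ hfw_pos.ne', mul_one]
  · rw [hBapp, hv, smul_smul, mul_inv_cancel₀ hfw_pos.ne', one_smul, ← hws]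
    exact A.apply_symm_apply w'

end Pert

section BddOrbit

variable {X : Type*} [NormedAddCommGroup X] [NormedSpace ℝ X] [CompleteSpace X]

lemma le_zero_of_forall_le_exp {a c' lam : ℝ} (hlam : 0 < lam) (hc' : 0 ≤ c')
    (h : ∀ N : ℕ, a ≤ c' * Real.exp (-lam * N)) : a ≤ 0 := by
  by_contra hcon
  push_neg at hcon
  obtain ⟨N, hN⟩ := exists_nat_gt (c' / a / lam)
  have h1 : c' / a < lam * N := by
    rw [div_lt_iff₀ hlam] at hN
    linarith [hN]
  have h2 : c' < a * (lam * N) := by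
    rw [div_lt_iff₀ hcon] at h1
    linarith
  have h3 : c' < a * Real.exp (lam * N) := by
    nlinarith [Real.add_one_le_exp (lam * (N : ℝ))]
  have h4 : a * Real.exp (lam * N) ≤ c' := by
    have h5 := h N
    have h6 : Real.exp (-lam * ↑N) * Real.exp (lam * ↑N) = 1 := by
      rw [← Real.exp_add]
      norm_num
    have h7 := mul_le_mul_of_nonneg_right h5 (Real.exp_pos (lam * (N : ℝ))).le
    rw [mul_assoc, h6, mul_one] at h7
    exact h7
  linarith

lemma bounded_orbit_eq_zero (B : ℤ → X ≃L[ℝ] X)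
    (hED : ExpDichotomy fun n => (B n : X →L[ℝ] X))
    (w : ℤ → X) (hstep : ∀ n, w (n + 1) = B n (w n))
    (K : ℝ) (hbd : ∀ n, ‖w n‖ ≤ K) : ∀ n, w n = 0 := by
  obtain ⟨E, P, C, lam, hC, hlam, hE0, hEs, hPP, hPA, hb1, hb2⟩ := hED
  simp only [] at hEs hPA hb1 hb2
  have hK0 : (0 : ℝ) ≤ K := le_trans (norm_nonneg (w 0)) (hbd 0)
  -- composition law
  have comp : ∀ m n k, m ≤ k → (E k m).comp (E m n) = E k n := by
    intro m n
    refine Int.le_induction (motive := fun k _ => (E k m).comp (E m n) = E k n) ?_ ?_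
    · simp only [hE0, ContinuousLinearMap.id_comp]
    · intro k _ ih
      rw [hEs k m, ContinuousLinearMap.comp_assoc, ih, ← hEs]
  have rinv : ∀ m k, m ≤ k → (E k m).comp (E m k) = ContinuousLinearMap.id ℝ X := by
    intro m k hk
    rw [comp m k k hk, hE0]
  have Eeq : ∀ m k, m ≤ k → ∃ e : X ≃L[ℝ] X, (e : X →L[ℝ] X) = E k m := by
    intro m
    refine Int.le_induction (motive := fun k _ => ∃ e : X ≃L[ℝ] X, (e : X →L[ℝ] X) = E k m) ?_ ?_
    · exact ⟨ContinuousLinearEquiv.refl ℝ X, by simp only [hE0]; rfl⟩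
    · rintro k _ ⟨e, he⟩
      refine ⟨e.trans (B k), ?_⟩
      simp only [hEs k m, ← he]
      rfl
  have linv : ∀ m k, m ≤ k → (E m k).comp (E k m) = ContinuousLinearMap.id ℝ X := by
    intro m k hk
    obtain ⟨e, he⟩ := Eeq m k hk
    have h1 : ∀ x, E k m (E m k x) = x := by
      intro x
      have := congrArg (fun T => T x) (rinv m k hk)
      simpa using this
    have h2 : ∀ x, E m k x = e.symm x := by
      intro x
      apply e.injective
      rw [e.apply_symm_apply]
      have := h1 x
      rw [← he] at this
      exact this
    ext x
    simp only [ContinuousLinearMap.coe_comp', Function.comp_apply,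
      ContinuousLinearMap.coe_id', id_eq]
    rw [h2, ← he]
    exact e.symm_apply_apply x
  -- orbit identities
  have orb_fwd : ∀ n k, n ≤ k → w k = E k n (w n) := by
    intro n
    refine Int.le_induction (motive := fun k _ => w k = E k n (w n)) ?_ ?_
    · simp only [hE0]; rfl
    · intro k _ ih
      rw [hstep k, ih, hEs k n]
      rfl
  have orb_all : ∀ a b, w a = E a b (w b) := by
    intro a b
    rcases le_total b a with hba | hab
    · exact orb_fwd b a hba
    · have h1 := orb_fwd a b hab
      rw [h1, ← ContinuousLinearMap.comp_apply, linv a b hab]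
      rfl
  -- commutation of projections
  have pcomm : ∀ n k, n ≤ k → (P k).comp (E k n) = (E k n).comp (P n) := by
    intro n
    refine Int.le_induction (motive := fun k _ => (P k).comp (E k n) = (E k n).comp (P n)) ?_ ?_
    · simp only [hE0, ContinuousLinearMap.id_comp, ContinuousLinearMap.comp_id]
    · intro k _ ih
      rw [hEs k n, ← ContinuousLinearMap.comp_assoc, hPA k, ContinuousLinearMap.comp_assoc,
        ih, ← ContinuousLinearMap.comp_assoc, ← hEs k n]
  have pcomm_rev : ∀ n k, n ≤ k → ∀ x, P n (E n k x) = E n k (P k x) := by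
    intro n k hk x
    have h1 : ∀ y, E k n (E n k y) = y := fun y => by
      have := congrArg (fun T => T y) (rinv n k hk)
      simpa using this
    have h2 : ∀ y, E n k (E k n y) = y := fun y => by
      have := congrArg (fun T => T y) (linv n k hk)
      simpa using this
    have h3 := congrArg (fun T => T (E n k x)) (pcomm n k hk)
    simp only [ContinuousLinearMap.coe_comp', Function.comp_apply] at h3
    -- h3 : P k (E k n (E n k x)) = E k n (P n (E n k x))
    rw [h1 x] at h3
    -- h3 : P k x = E k n (P n (E n k x))
    rw [h3, h2]
  -- norms of the projections
  have pnorm : ∀ k, ‖P k‖ ≤ C := by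
    intro k
    have := hb1 k k le_rfl
    rw [hE0, ContinuousLinearMap.id_comp] at this
    simpa using this
  have qnorm : ∀ k, ‖ContinuousLinearMap.id ℝ X - P k‖ ≤ C := by
    intro k
    have := hb2 k k le_rfl
    rw [hE0, ContinuousLinearMap.id_comp] at this
    simpa using this
  -- stable part vanishes
  have stable : ∀ n, P n (w n) = 0 := by
    intro n
    have key : ∀ N : ℕ, ‖P n (w n)‖ ≤ (C * (C * K)) * Real.exp (-lam * N) := by
      intro N
      set k : ℤ := n - N with hkdef
      have hkn : k ≤ n := by omega
      have h1 : P n (w n) = ((E n k).comp (P k)) (P k (w k)) := by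
        conv_lhs => rw [orb_all n k]
        have hcm := congrArg (fun T : X →L[ℝ] X => T (w k)) (pcomm k n hkn)
        simp only [ContinuousLinearMap.coe_comp', Function.comp_apply] at hcm
        rw [hcm]
        have hpp := congrArg (fun T : X →L[ℝ] X => T (w k)) (hPP k)
        simp only [ContinuousLinearMap.coe_comp', Function.comp_apply] at hpp
        rw [ContinuousLinearMap.comp_apply, hpp]
      have h2 : ‖P n (w n)‖ ≤ ‖(E n k).comp (P k)‖ * ‖P k (w k)‖ := by
        rw [h1]; exact ContinuousLinearMap.le_opNorm _ _
      have h3 : ‖(E n k).comp (P k)‖ ≤ C * Real.exp (-lam * ((n - k : ℤ) : ℝ)) := hb1 n k hkn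
      have h4 : ‖P k (w k)‖ ≤ C * K := by
        calc ‖P k (w k)‖ ≤ ‖P k‖ * ‖w k‖ := ContinuousLinearMap.le_opNorm _ _
        _ ≤ C * K := mul_le_mul (pnorm k) (hbd k) (norm_nonneg _) hC.le
      have h5 : ((n - k : ℤ) : ℝ) = (N : ℝ) := by
        rw [hkdef]; push_cast; ring
      calc ‖P n (w n)‖ ≤ (C * Real.exp (-lam * ((n - k : ℤ) : ℝ))) * (C * K) := by
            refine le_trans h2 (mul_le_mul h3 h4 (norm_nonneg _) ?_)
            positivity
      _ = (C * (C * K)) * Real.exp (-lam * N) := by rw [h5]; ring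
    have hle := le_zero_of_forall_le_exp hlam
      (mul_nonneg hC.le (mul_nonneg hC.le hK0)) key
    exact norm_le_zero_iff.mp hle
  -- the complementary part vanishes
  have qapp : ∀ (k : ℤ) (x : X), (ContinuousLinearMap.id ℝ X - P k) x = x - P k x := by
    intro k x
    simp
  have unstable : ∀ n, w n - P n (w n) = 0 := by
    intro n
    have key : ∀ N : ℕ, ‖w n - P n (w n)‖ ≤ (C * (C * K)) * Real.exp (-lam * N) := by
      intro N
      set k : ℤ := n + N with hkdef
      have hkn : n ≤ k := by omega
      set Q : X →L[ℝ] X := ContinuousLinearMap.id ℝ X - P k with hQ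
      have hppk : ∀ x, P k (P k x) = P k x := by
        intro x
        have := congrArg (fun T : X →L[ℝ] X => T x) (hPP k)
        simpa using this
      have hQQ : ∀ x, Q (Q x) = Q x := by
        intro x
        rw [hQ]
        rw [qapp, qapp, map_sub, hppk]
        abel
      have h1 : w n - P n (w n) = ((E n k).comp Q) (Q (w k)) := by
        conv_lhs => rw [orb_all n k]
        rw [ContinuousLinearMap.comp_apply, hQQ]
        rw [hQ, qapp, map_sub, pcomm_rev n k hkn (w k)]
      have h2 : ‖w n - P n (w n)‖ ≤ ‖(E n k).comp Q‖ * ‖Q (w k)‖ := by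
        rw [h1]; exact ContinuousLinearMap.le_opNorm _ _
      have h3 : ‖(E n k).comp Q‖ ≤ C * Real.exp (-lam * ((k - n : ℤ) : ℝ)) := hb2 n k hkn
      have h4 : ‖Q (w k)‖ ≤ C * K := by
        calc ‖Q (w k)‖ ≤ ‖Q‖ * ‖w k‖ := ContinuousLinearMap.le_opNorm _ _
        _ ≤ C * K := mul_le_mul (qnorm k) (hbd k) (norm_nonneg _) hC.le
      have h5 : ((k - n : ℤ) : ℝ) = (N : ℝ) := by
        rw [hkdef]; push_cast; ring
      calc ‖w n - P n (w n)‖ ≤ (C * Real.exp (-lam * ((k - n : ℤ) : ℝ))) * (C * K) := by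
            refine le_trans h2 (mul_le_mul h3 h4 (norm_nonneg _) ?_)
            positivity
      _ = (C * (C * K)) * Real.exp (-lam * N) := by rw [h5]; ring
    have hle := le_zero_of_forall_le_exp hlam
      (mul_nonneg hC.le (mul_nonneg hC.le hK0)) key
    exact norm_le_zero_iff.mp hle
  intro n
  have h1 := stable n
  have h2 := unstable n
  rw [h1, sub_zero] at h2
  exact h2

end BddOrbit

/-- In the setting of the nonautonomous Grobman–Hartman theorem, the conjugating maps are injective. -/
theorem grobman_hartman_injective {X : Type*} [NormedAddCommGroup X]
    [NormedSpace ℝ X] [CompleteSpace X]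
    (A : ℤ → X ≃L[ℝ] X) (M : ℝ) (hM : ∀ m, ‖(A m : X →L[ℝ] X)‖ ≤ M)
    (hED : ExpDichotomy fun m => (A m : X →L[ℝ] X))
    (c : ℝ) (hc : 0 < c)
    (hrobust : ∀ B : ℤ → X →L[ℝ] X,
      (∀ m, ‖(A m : X →L[ℝ] X) - B m‖ ≤ c) → ExpDichotomy B)
    (D r : ℝ) (hD : 0 < D) (hr : 0 < r) :
    ∃ δ > (0 : ℝ), ∃ ε > (0 : ℝ),
      ∀ (g : ℤ → X → X) (g' : ℤ → X → X →L[ℝ] X),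
        (∀ n x, HasFDerivAt (g n) (g' n x) x) →
        (∀ n x, ‖g' n x‖ ≤ c / 2) →
        (∀ n x y, ‖g' n x - g' n y‖ ≤ D * ‖x - y‖ ^ r) →
        (∀ n x, ‖g n x‖ ≤ δ) →
        (∀ n, IsHomeomorph fun x => A n x + g n x) →
        ∀ h : ℤ → X → X,
          (∀ (m : ℤ) (x : X), h (m + 1) (A m x + g m x) = A m (h m x)) →
          (∀ (m : ℤ) (x : X), ‖h m x - x‖ ≤ ε) →
          ∀ m : ℤ, Function.Injective (h m) := by
  refine ⟨1, one_pos, 1, one_pos, ?_⟩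
  intro g g' hgd hg'b _hHold _hgb hGH h hconj hclose m y z hyz
  by_contra hne
  -- the nonlinear maps as bijections
  have hbij : ∀ n, Function.Bijective (fun x => A n x + g n x) := fun n => (hGH n).bijective
  let e : ℤ → X ≃ X := fun n => Equiv.ofBijective _ (hbij n)
  have he : ∀ n x, e n x = A n x + g n x := fun n x => rfl
  -- the two orbits through y and z at time m
  set Y : ℤ → X := zorb e m y with hYdZ
  set Z : ℤ → X := zorb e m z with hZdZ
  have hYs : ∀ n, Y (n + 1) = e n (Y n) := fun n => zorb_step e m y n
  have hZs : ∀ n, Z (n + 1) = e n (Z n) := fun n => zorb_step e m z n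
  have hYm : Y m = y := zorb_base e m y
  have hZm : Z m = z := zorb_base e m z
  -- the difference of the conjugated orbits is a vanishing linear orbit
  set u : ℤ → X := fun n => h n (Y n) - h n (Z n) with hud
  have hum : u m = 0 := by
    simp only [hud, hYm, hZm, hyz, sub_self]
  have hustep : ∀ n, u (n + 1) = A n (u n) := by
    intro n
    have h1 : h (n + 1) (Y (n + 1)) = A n (h n (Y n)) := by
      rw [hYs n]
      exact hconj n (Y n)
    have h2 : h (n + 1) (Z (n + 1)) = A n (h n (Z n)) := by
      rw [hZs n]
      exact hconj n (Z n)
    simp only [hud, h1, h2, map_sub]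
  have huz : ∀ n, u n = 0 := by
    intro n
    rcases le_total m n with hmn | hmn
    · refine Int.le_induction (motive := fun j _ => u j = 0) hum ?_ n hmn
      intro k _ ih
      rw [hustep k, ih, map_zero]
    · refine Int.le_induction_down (motive := fun j _ => u j = 0) hum ?_ n hmn
      intro k _ ih
      have h1 : u (k - 1 + 1) = A (k - 1) (u (k - 1)) := hustep (k - 1)
      have h2 : k - 1 + 1 = k := by ring
      rw [h2, ih] at h1
      have := congrArg (A (k - 1)).symm h1.symm
      simpa using this
  have hheq : ∀ n, h n (Y n) = h n (Z n) := by
    intro n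
    have := huz n
    rw [hud] at this
    exact sub_eq_zero.mp this
  -- the difference of the two nonlinear orbits
  set w : ℤ → X := fun n => Y n - Z n with hwd
  have hwb : ∀ n, ‖w n‖ ≤ 2 := by
    intro n
    have h1 : w n = (Y n - h n (Y n)) + (h n (Z n) - Z n) := by
      rw [hwd]
      simp only []
      rw [hheq n]
      abel
    rw [h1]
    calc ‖(Y n - h n (Y n)) + (h n (Z n) - Z n)‖
        ≤ ‖Y n - h n (Y n)‖ + ‖h n (Z n) - Z n‖ := norm_add_le _ _
    _ ≤ 1 + 1 := by
        refine add_le_add ?_ (hclose n (Z n))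
        rw [norm_sub_rev]
        exact hclose n (Y n)
    _ = 2 := by norm_num
  have hwm : w m ≠ 0 := by
    simp only [hwd, hYm, hZm]
    exact sub_ne_zero.mpr hne
  have hwn : ∀ n, w n ≠ 0 := by
    intro n h0
    have hYZ : Y n = Z n := by
      have : Y n - Z n = 0 := h0
      exact sub_eq_zero.mp this
    have hall := zorb_agree e Y Z hYs hZs n hYZ
    apply hwm
    simp only [hwd, hall m, sub_self]
  -- the orbit-difference satisfies a perturbed linear recursion
  have hrn : ∀ n, ‖w (n + 1) - A n (w n)‖ ≤ c / 2 * ‖w n‖ := by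
    intro n
    have hlip : ‖g n (Y n) - g n (Z n)‖ ≤ c / 2 * ‖Y n - Z n‖ :=
      Convex.norm_image_sub_le_of_norm_hasFDerivWithin_le
        (fun x _ => (hgd n x).hasFDerivWithinAt) (fun x _ => hg'b n x)
        convex_univ (Set.mem_univ _) (Set.mem_univ _)
    have h1 : w (n + 1) - A n (w n) = g n (Y n) - g n (Z n) := by
      simp only [hwd, hYs n, hZs n, he, map_sub]
      abel
    rw [h1]
    exact hlip
  have hpert : ∀ n, ∃ B : X ≃L[ℝ] X,
      ‖(B : X →L[ℝ] X) - (A n : X →L[ℝ] X)‖ ≤ c ∧ B (w n) = w (n + 1) :=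
    fun n => exists_pert (A n) hc (hwn n) (hwn (n + 1)) (hrn n)
  choose B hB1 hB2 using hpert
  have hEDB : ExpDichotomy fun n => (B n : X →L[ℝ] X) := by
    refine hrobust _ (fun n => ?_)
    rw [norm_sub_rev]
    exact hB1 n
  have hzero := bounded_orbit_eq_zero B hEDB w (fun n => (hB2 n).symm) 2 hwb
  exact hwm (hzero m)
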